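/- arXiv:1501.03349 — 3 statements merged into one kernel-verified Lean document; each statement's English description precedes it below -/
import Mathlib

section
/- Two points of ℂ² have the same image under the complex Hopf map h(z₁,z₂) = (|z₁|² − |z₂|², 2·conj(z₁)·z₂) if and only if they lie in the same orbit of the diagonal circle action; that is, h(z₁,z₂) = h(w₁,w₂) if and only if there exists ζ ∈ ℂ with |ζ| = 1 and (w₁,w₂) = (ζz₁, ζz₂). -/
/-- The complex Hopf map `h(z₁,z₂) = (|z₁|² − |z₂|², 2 conj(z₁) z₂)`. -/
noncomputable def hopfMap (z : ℂ × ℂ) : ℝ × ℂ :=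
  (‖z.1‖ ^ 2 - ‖z.2‖ ^ 2, 2 * (starRingEnd ℂ) z.1 * z.2)

/-- Two points of `ℂ²` have the same Hopf image iff they lie in the same orbit
of the diagonal circle action. -/
theorem hopfMap_eq_iff_orbit (z w : ℂ × ℂ) :
    hopfMap z = hopfMap w ↔
      ∃ ζ : ℂ, ‖ζ‖ = 1 ∧ w = (ζ * z.1, ζ * z.2) := by
  constructor
  · intro h
    rw [hopfMap, hopfMap, Prod.mk.injEq] at h
    obtain ⟨h1, h2⟩ := h
    have h2' : (starRingEnd ℂ) z.1 * z.2 = (starRingEnd ℂ) w.1 * w.2 := by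
      apply mul_left_cancel₀ (two_ne_zero (α := ℂ))
      rw [← mul_assoc, ← mul_assoc]; exact h2
    set a := ‖z.1‖ with ha'
    set b := ‖z.2‖ with hb'
    set c := ‖w.1‖ with hc'
    set d := ‖w.2‖ with hd'
    have hab : a * b = c * d := by
      have := congrArg (fun x : ℂ => ‖x‖) h2'
      simpa [norm_mul, Complex.norm_conj] using this
    have ha0 : 0 ≤ a := norm_nonneg _
    have hb0 : 0 ≤ b := norm_nonneg _
    have hc0 : 0 ≤ c := norm_nonneg _
    have hd0 : 0 ≤ d := norm_nonneg _
    have hsumsq : (a ^ 2 + b ^ 2) ^ 2 = (c ^ 2 + d ^ 2) ^ 2 := by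
      linear_combination (a ^ 2 - b ^ 2 + c ^ 2 - d ^ 2) * h1 +
        4 * (a * b + c * d) * hab
    have hsum : a ^ 2 + b ^ 2 = c ^ 2 + d ^ 2 := by nlinarith
    have hac : a = c := by nlinarith
    have hbd : b = d := by nlinarith
    by_cases hz1 : z.1 = 0
    · have hw1 : w.1 = 0 := by
        have : c = 0 := by rw [← hac, ha', hz1, norm_zero]
        exact norm_eq_zero.mp (by rw [← hc']; exact this)
      by_cases hz2 : z.2 = 0
      · have hw2 : w.2 = 0 := by
          have : d = 0 := by rw [← hbd, hb', hz2, norm_zero]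
          exact norm_eq_zero.mp (by rw [← hd']; exact this)
        exact ⟨1, by simp, by rw [Prod.ext_iff]; simp [hw1, hw2, hz1, hz2]⟩
      · refine ⟨w.2 / z.2, ?_, ?_⟩
        · rw [norm_div, ← hd', ← hb', ← hbd]
          exact div_self (by simpa [hb'] using (norm_ne_zero_iff.mpr hz2))
        · rw [Prod.ext_iff]
          constructor
          · simp [hw1, hz1]
          · field_simp
    · refine ⟨w.1 / z.1, ?_, ?_⟩
      · rw [norm_div, ← hc', ← ha', hac, ← hac]
        exact div_self (by simpa [ha'] using (norm_ne_zero_iff.mpr hz1))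
      · have hkey : z.2 * w.1 = z.1 * w.2 := by
          have hconj : (starRingEnd ℂ) z.1 ≠ 0 := by
            simpa using hz1
          apply mul_left_cancel₀ hconj
          have hnsq : w.1 * (starRingEnd ℂ) w.1 = z.1 * (starRingEnd ℂ) z.1 := by
            rw [Complex.mul_conj, Complex.mul_conj]
            norm_cast
            rw [← Complex.sq_norm, ← Complex.sq_norm, ← ha', ← hc', hac]
          calc (starRingEnd ℂ) z.1 * (z.2 * w.1)
              = ((starRingEnd ℂ) z.1 * z.2) * w.1 := by ring
            _ = ((starRingEnd ℂ) w.1 * w.2) * w.1 := by rw [h2']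
            _ = (w.1 * (starRingEnd ℂ) w.1) * w.2 := by ring
            _ = (z.1 * (starRingEnd ℂ) z.1) * w.2 := by rw [hnsq]
            _ = (starRingEnd ℂ) z.1 * (z.1 * w.2) := by ring
        rw [Prod.ext_iff]
        constructor
        · field_simp
        · field_simp
          linear_combination -hkey
  · rintro ⟨ζ, hζ, rfl⟩
    rw [hopfMap, hopfMap, Prod.mk.injEq]
    constructor
    · simp [map_mul, hζ]
    · simp only [map_mul]
      have : (starRingEnd ℂ) ζ * ζ = 1 := by
        rw [mul_comm, Complex.mul_conj]
        norm_cast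
        rw [← Complex.sq_norm, hζ]; norm_num
      linear_combination (-(2 * (starRingEnd ℂ) z.1 * z.2)) * this
end

section
/- For the complex Hopf map h : ℝ⁴ ≅ ℂ² → ℝ³ ≅ ℝ × ℂ, h(z₁,z₂) = (|z₁|² − |z₂|², 2·conj(z₁)·z₂), and any twice continuously differentiable function v : ℝ³ → ℝ, the composition u = v ∘ h satisfies Δu(z) = 4‖z‖² · (Δv)(h(z)) for all z ∈ ℂ², where Δ denotes the Euclidean Laplacian in ℝ⁴ and ℝ³ respectively. -/
open Complex

section HopfAux

/-- Second derivative along a quadratic curve, for `C²` functions. -/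
lemma hopf_quad_second_deriv (v : ℝ × ℂ → ℝ) (hv : ContDiff ℝ 2 v) (p a b : ℝ × ℂ) :
    deriv (deriv (fun t : ℝ => v (p + t • a + (t * t) • b))) 0
      = fderiv ℝ (fderiv ℝ v) p a a + fderiv ℝ v p ((2 : ℝ) • b) := by
  set c : ℝ → ℝ × ℂ := fun t => p + t • a + (t * t) • b with hc_def
  have hv1 : Differentiable ℝ v := hv.differentiable two_ne_zero
  have hc : ∀ t : ℝ, HasDerivAt c (a + (2 * t) • b) t := by
    intro t
    have h1 : HasDerivAt (fun t : ℝ => p + t • a) a t := by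
      simpa using ((hasDerivAt_id t).smul_const a).const_add p
    have h2 : HasDerivAt (fun t : ℝ => (t * t) • b) ((2 * t) • b) t := by
      have := ((hasDerivAt_id t).mul (hasDerivAt_id t)).smul_const b
      simpa [two_mul, add_smul] using this
    exact h1.add h2
  have hderiv1 : deriv (fun t : ℝ => v (c t))
      = fun t => fderiv ℝ v (c t) (a + (2 * t) • b) := by
    funext t
    exact ((hv1 (c t)).hasFDerivAt.comp_hasDerivAt t (hc t)).deriv
  have hc0 : c 0 = p := by simp [hc_def]
  have hF : HasDerivAt (fun t => fderiv ℝ v (c t)) (fderiv ℝ (fderiv ℝ v) p a) 0 := by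
    have hdf : ContDiff ℝ 1 (fderiv ℝ v) := hv.fderiv_right le_rfl
    have h1 : HasFDerivAt (fderiv ℝ v) (fderiv ℝ (fderiv ℝ v) p) p :=
      (hdf.differentiable one_ne_zero p).hasFDerivAt
    rw [← hc0] at h1
    have := h1.comp_hasDerivAt 0 (hc 0)
    simp only [hc0, mul_zero, zero_smul, add_zero] at this; exact this
  have hw : HasDerivAt (fun t : ℝ => a + (2 * t) • b) ((2 : ℝ) • b) 0 := by
    have : HasDerivAt (fun t : ℝ => (2 * t)) 2 0 := by
      simpa using (hasDerivAt_id (0:ℝ)).const_mul 2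
    simpa using (this.smul_const b).const_add a
  have := hF.clm_apply hw
  rw [hderiv1]
  simpa [hc0] using this.deriv

/-- Expansion of a quadratic form applied to a decomposed vector. -/
lemma hopf_Bquad (B : (ℝ × ℂ) →L[ℝ] (ℝ × ℂ) →L[ℝ] ℝ) (α β γ : ℝ) :
    B ((α : ℝ), (β : ℂ) + (γ : ℝ) * Complex.I) ((α : ℝ), (β : ℂ) + (γ : ℝ) * Complex.I)
      = α * α * B (1, 0) (1, 0) + β * β * B (0, 1) (0, 1)
        + γ * γ * B (0, Complex.I) (0, Complex.I)
        + α * β * (B (1, 0) (0, 1) + B (0, 1) (1, 0))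
        + α * γ * (B (1, 0) (0, Complex.I) + B (0, Complex.I) (1, 0))
        + β * γ * (B (0, 1) (0, Complex.I) + B (0, Complex.I) (0, 1)) := by
  have hd : ((α : ℝ), (β : ℂ) + (γ : ℝ) * Complex.I)
      = α • ((1:ℝ), (0:ℂ)) + β • ((0:ℝ), (1:ℂ)) + γ • ((0:ℝ), Complex.I) := by
    simp [Prod.ext_iff, Complex.ext_iff]
  rw [hd]
  simp only [map_add, map_smul, ContinuousLinearMap.add_apply,
    ContinuousLinearMap.smul_apply, smul_eq_mul]
  ring

end HopfAux

/-- The second derivative at `0` of `t ↦ u (p + t e)`, i.e. the second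
directional derivative of `u` at `p` in the direction `e`. -/
noncomputable def secondDerivAlong {E : Type*} [NormedAddCommGroup E]
    [NormedSpace ℝ E] (u : E → ℝ) (p e : E) : ℝ :=
  deriv (deriv (fun t : ℝ => u (p + t • e))) 0

/-- The Euclidean Laplacian on `ℝ × ℂ ≅ ℝ³`. -/
noncomputable def lap3 (v : ℝ × ℂ → ℝ) (p : ℝ × ℂ) : ℝ :=
  secondDerivAlong v p (1, 0) + secondDerivAlong v p (0, 1) +
    secondDerivAlong v p (0, Complex.I)

/-- The Euclidean Laplacian on `ℂ × ℂ ≅ ℝ⁴`. -/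
noncomputable def lap4 (u : ℂ × ℂ → ℝ) (p : ℂ × ℂ) : ℝ :=
  secondDerivAlong u p (1, 0) + secondDerivAlong u p (Complex.I, 0) +
    secondDerivAlong u p (0, 1) + secondDerivAlong u p (0, Complex.I)

section HopfExpand

/-- `secondDerivAlong` along a line, for `C²` functions: the pure second derivative. -/
lemma secondDerivAlong_eq (v : ℝ × ℂ → ℝ) (hv : ContDiff ℝ 2 v) (p e : ℝ × ℂ) :
    secondDerivAlong v p e = fderiv ℝ (fderiv ℝ v) p e e := by
  have h : (fun t : ℝ => v (p + t • e))
      = fun t : ℝ => v (p + t • e + (t * t) • (0 : ℝ × ℂ)) := by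
    funext t; simp
  rw [secondDerivAlong, h, hopf_quad_second_deriv v hv p e 0]
  simp

lemma hopf_e1 (z : ℂ × ℂ) (t : ℝ) :
    hopfMap (z + t • ((1:ℂ), (0:ℂ)))
      = hopfMap z + t • ((2 * z.1.re : ℝ), ((2 * z.2.re : ℝ) : ℂ) + (2 * z.2.im : ℝ) * Complex.I)
        + (t * t) • ((1:ℝ), (0:ℂ)) := by
  simp only [hopfMap, Prod.ext_iff, Prod.smul_fst, Prod.smul_snd, Prod.fst_add, Prod.snd_add,
    Complex.sq_norm, Complex.normSq_apply, Prod.smul_mk, smul_eq_mul, Complex.real_smul,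
    Complex.ext_iff]
  push_cast
  simp [Complex.add_re, Complex.add_im]
  refine ⟨by ring, by ring, by ring⟩

lemma hopf_e2 (z : ℂ × ℂ) (t : ℝ) :
    hopfMap (z + t • (Complex.I, (0:ℂ)))
      = hopfMap z + t • ((2 * z.1.im : ℝ), ((2 * z.2.im : ℝ) : ℂ) + (-(2 * z.2.re) : ℝ) * Complex.I)
        + (t * t) • ((1:ℝ), (0:ℂ)) := by
  simp only [hopfMap, Prod.ext_iff, Prod.smul_fst, Prod.smul_snd, Prod.fst_add, Prod.snd_add,
    Complex.sq_norm, Complex.normSq_apply, Prod.smul_mk, smul_eq_mul, Complex.real_smul,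
    Complex.ext_iff]
  push_cast
  simp [Complex.add_re, Complex.add_im]
  refine ⟨by ring, by ring, by ring⟩

lemma hopf_e3 (z : ℂ × ℂ) (t : ℝ) :
    hopfMap (z + t • ((0:ℂ), (1:ℂ)))
      = hopfMap z + t • ((-(2 * z.2.re) : ℝ), ((2 * z.1.re : ℝ) : ℂ) + (-(2 * z.1.im) : ℝ) * Complex.I)
        + (t * t) • ((-1:ℝ), (0:ℂ)) := by
  simp only [hopfMap, Prod.ext_iff, Prod.smul_fst, Prod.smul_snd, Prod.fst_add, Prod.snd_add,
    Complex.sq_norm, Complex.normSq_apply, Prod.smul_mk, smul_eq_mul, Complex.real_smul,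
    Complex.ext_iff]
  push_cast
  simp [Complex.add_re, Complex.add_im]
  refine ⟨by ring, by ring, by ring⟩

lemma hopf_e4 (z : ℂ × ℂ) (t : ℝ) :
    hopfMap (z + t • ((0:ℂ), Complex.I))
      = hopfMap z + t • ((-(2 * z.2.im) : ℝ), ((2 * z.1.im : ℝ) : ℂ) + (2 * z.1.re : ℝ) * Complex.I)
        + (t * t) • ((-1:ℝ), (0:ℂ)) := by
  simp only [hopfMap, Prod.ext_iff, Prod.smul_fst, Prod.smul_snd, Prod.fst_add, Prod.snd_add,
    Complex.sq_norm, Complex.normSq_apply, Prod.smul_mk, smul_eq_mul, Complex.real_smul,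
    Complex.ext_iff]
  push_cast
  simp [Complex.add_re, Complex.add_im]
  refine ⟨by ring, by ring, by ring⟩

end HopfExpand

/-- The Hopf map is a harmonic morphism with dilation `4‖z‖²`:
`Δ(v ∘ h)(z) = 4‖z‖²·(Δv)(h(z))` for every `C²` function `v : ℝ³ → ℝ`. -/
theorem lap4_comp_hopfMap (v : ℝ × ℂ → ℝ) (hv : ContDiff ℝ 2 v) (z : ℂ × ℂ) :
    lap4 (fun w => v (hopfMap w)) z
      = 4 * (‖z.1‖ ^ 2 + ‖z.2‖ ^ 2) * lap3 v (hopfMap z) := by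
  set p := hopfMap z with hp
  set B := fderiv ℝ (fderiv ℝ v) p with hB
  set L := fderiv ℝ v p with hL
  -- the four second derivatives along the coordinate directions upstairs
  have key : ∀ (e : ℂ × ℂ) (a b : ℝ × ℂ),
      (∀ t : ℝ, hopfMap (z + t • e) = p + t • a + (t * t) • b) →
      secondDerivAlong (fun w => v (hopfMap w)) z e = B a a + L ((2:ℝ) • b) := by
    intro e a b h
    have : (fun t : ℝ => v (hopfMap (z + t • e)))
        = fun t : ℝ => v (p + t • a + (t * t) • b) := by
      funext t; rw [h t]
    rw [secondDerivAlong, this, hopf_quad_second_deriv v hv p a b]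
  have h1 := key _ _ _ (hopf_e1 z)
  have h2 := key _ _ _ (hopf_e2 z)
  have h3 := key _ _ _ (hopf_e3 z)
  have h4 := key _ _ _ (hopf_e4 z)
  have hsymm : ∀ a b : ℝ × ℂ, B a b = B b a := by
    intro a b
    exact (hv.contDiffAt.isSymmSndFDerivAt (by norm_num)) a b
  have hlap3 : lap3 v p = B (1,0) (1,0) + B (0,1) (0,1) + B (0,Complex.I) (0,Complex.I) := by
    rw [lap3, secondDerivAlong_eq v hv, secondDerivAlong_eq v hv, secondDerivAlong_eq v hv]
  have hLcancel : L ((2:ℝ) • ((1:ℝ), (0:ℂ))) + L ((2:ℝ) • ((-1:ℝ), (0:ℂ))) = 0 := by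
    have : ((2:ℝ) • ((-1:ℝ), (0:ℂ))) = -((2:ℝ) • ((1:ℝ), (0:ℂ))) := by
      simp [Prod.ext_iff]
    rw [this, map_neg]; ring
  rw [lap4, h1, h2, h3, h4, hlap3,
    hopf_Bquad B (2 * z.1.re) (2 * z.2.re) (2 * z.2.im),
    hopf_Bquad B (2 * z.1.im) (2 * z.2.im) (-(2 * z.2.re)),
    hopf_Bquad B (-(2 * z.2.re)) (2 * z.1.re) (-(2 * z.1.im)),
    hopf_Bquad B (-(2 * z.2.im)) (2 * z.1.im) (2 * z.1.re)]
  have habs1 : ‖z.1‖ ^ 2 = z.1.re * z.1.re + z.1.im * z.1.im := by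
    rw [Complex.sq_norm, Complex.normSq_apply]
  have habs2 : ‖z.2‖ ^ 2 = z.2.re * z.2.re + z.2.im * z.2.im := by
    rw [Complex.sq_norm, Complex.normSq_apply]
  rw [habs1, habs2, hsymm (0,1) (1,0), hsymm (0,Complex.I) (1,0), hsymm (0,Complex.I) (0,1)]
  have := hLcancel
  ring_nf
  ring_nf at this
  linarith [this]
end

section
/- If v : ℝ³ → ℝ is a harmonic C² function on an open set Θ ⊆ ℝ³, then u = v ∘ h is harmonic on the open set h⁻¹(Θ) ⊆ ℝ⁴, where h is the complex Hopf map h(z₁,z₂) = (|z₁|² − |z₂|², 2·conj(z₁)·z₂). -/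
/-- Second derivative of the composition of a `C²` function with a quadratic curve. -/
lemma secondDeriv_comp_quadratic {F : Type*} [NormedAddCommGroup F] [NormedSpace ℝ F]
    (v : F → ℝ) (Θ : Set F) (hΘ : IsOpen Θ) (hv : ContDiffOn ℝ 2 v Θ)
    (x₀ a b : F) (hx : x₀ ∈ Θ) :
    deriv (deriv (fun t : ℝ => v (x₀ + t • a + t ^ 2 • b))) 0
      = fderiv ℝ (fderiv ℝ v) x₀ a a + 2 * fderiv ℝ v x₀ b := by
  set c : ℝ → F := fun t => x₀ + t • a + t ^ 2 • b with hc_def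
  have hc0 : c 0 = x₀ := by simp [hc_def]
  have hccont : Continuous c := by
    apply Continuous.add
    apply Continuous.add continuous_const ((continuous_id).smul continuous_const)
    exact (continuous_pow 2).smul continuous_const
  have hmem : ∀ᶠ t in nhds (0:ℝ), c t ∈ Θ := by
    have : Θ ∈ nhds (c 0) := hc0 ▸ hΘ.mem_nhds hx
    exact hccont.continuousAt.preimage_mem_nhds this
  have hcd : ∀ t : ℝ, HasDerivAt c (a + (2 * t) • b) t := by
    intro t
    have h1 : HasDerivAt (fun s : ℝ => s • a) ((1:ℝ) • a) t := (hasDerivAt_id t).smul_const a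
    have h2 : HasDerivAt (fun s : ℝ => s ^ 2 • b) ((2 * t ^ 1) • b) t :=
      (hasDerivAt_pow 2 t).smul_const b
    have := (h1.const_add x₀).add h2
    simpa [hc_def, add_assoc, Pi.add_def] using this
  have hderiv : ∀ᶠ t in nhds (0:ℝ),
      deriv (fun s => v (c s)) t = fderiv ℝ v (c t) (a + (2 * t) • b) := by
    filter_upwards [hmem] with t ht
    have hfd : HasFDerivAt v (fderiv ℝ v (c t)) (c t) :=
      ((hv.contDiffAt (hΘ.mem_nhds ht)).differentiableAt (by norm_num)).hasFDerivAt
    exact (hfd.comp_hasDerivAt t (hcd t)).deriv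
  rw [Filter.EventuallyEq.deriv_eq hderiv]
  have H2 : ContDiffAt ℝ 1 (fderiv ℝ v) x₀ :=
    (hv.contDiffAt (hΘ.mem_nhds hx)).fderiv_right (le_refl 2)
  have hL : HasFDerivAt (fderiv ℝ v) (fderiv ℝ (fderiv ℝ v) x₀) x₀ :=
    (H2.differentiableAt one_ne_zero).hasFDerivAt
  have hc0' : HasDerivAt c a 0 := by simpa using hcd 0
  have hLc : HasDerivAt (fun t => fderiv ℝ v (c t)) (fderiv ℝ (fderiv ℝ v) x₀ a) 0 := by
    have : HasDerivAt (fderiv ℝ v ∘ c) (fderiv ℝ (fderiv ℝ v) x₀ a) 0 :=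
      HasFDerivAt.comp_hasDerivAt 0 (hc0 ▸ hL) hc0'
    exact this
  have hw : HasDerivAt (fun t : ℝ => a + (2 * t) • b) ((2:ℝ) • b) 0 := by
    have : HasDerivAt (fun t : ℝ => (2 * t)) (2:ℝ) 0 := by
      simpa using (hasDerivAt_id (0:ℝ)).const_mul 2
    simpa using (this.smul_const b).const_add a
  have := hLc.clm_apply hw
  simp only [hc0] at this
  rw [this.deriv]
  simp [two_smul, two_mul]

lemma hopf_curve1 (p : ℂ × ℂ) (t : ℝ) :
    hopfMap (p + t • ((1:ℂ), (0:ℂ)))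
      = hopfMap p + t • ((2 * p.1.re : ℝ), (2 * p.2 : ℂ)) + t ^ 2 • ((1:ℝ), (0:ℂ)) := by
  simp [hopfMap, Prod.ext_iff, Complex.ext_iff, Complex.sq_norm, Complex.normSq_apply]
  refine ⟨by ring, by ring, by ring⟩

lemma hopf_curve2 (p : ℂ × ℂ) (t : ℝ) :
    hopfMap (p + t • ((Complex.I), (0:ℂ)))
      = hopfMap p + t • ((2 * p.1.im : ℝ), (-2 * Complex.I * p.2 : ℂ)) + t ^ 2 • ((1:ℝ), (0:ℂ)) := by
  simp [hopfMap, Prod.ext_iff, Complex.ext_iff, Complex.sq_norm, Complex.normSq_apply]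
  refine ⟨by ring, by ring, by ring⟩

lemma hopf_curve3 (p : ℂ × ℂ) (t : ℝ) :
    hopfMap (p + t • ((0:ℂ), (1:ℂ)))
      = hopfMap p + t • ((-2 * p.2.re : ℝ), (2 * (starRingEnd ℂ) p.1 : ℂ)) + t ^ 2 • ((-1:ℝ), (0:ℂ)) := by
  simp [hopfMap, Prod.ext_iff, Complex.ext_iff, Complex.sq_norm, Complex.normSq_apply]
  refine ⟨by ring, by ring, by ring⟩

lemma hopf_curve4 (p : ℂ × ℂ) (t : ℝ) :
    hopfMap (p + t • ((0:ℂ), Complex.I))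
      = hopfMap p + t • ((-2 * p.2.im : ℝ), (2 * Complex.I * (starRingEnd ℂ) p.1 : ℂ)) + t ^ 2 • ((-1:ℝ), (0:ℂ)) := by
  simp [hopfMap, Prod.ext_iff, Complex.ext_iff, Complex.sq_norm, Complex.normSq_apply]
  refine ⟨by ring, by ring, by ring⟩

lemma bilin_expand (B : (ℝ × ℂ) →L[ℝ] (ℝ × ℂ) →L[ℝ] ℝ) (a c : ℝ × ℂ) :
    B a c =
      a.1 * c.1 * B (1, 0) (1, 0) + a.1 * c.2.re * B (1, 0) (0, 1)
        + a.1 * c.2.im * B (1, 0) (0, Complex.I)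
        + a.2.re * c.1 * B (0, 1) (1, 0) + a.2.re * c.2.re * B (0, 1) (0, 1)
        + a.2.re * c.2.im * B (0, 1) (0, Complex.I)
        + a.2.im * c.1 * B (0, Complex.I) (1, 0) + a.2.im * c.2.re * B (0, Complex.I) (0, 1)
        + a.2.im * c.2.im * B (0, Complex.I) (0, Complex.I) := by
  obtain ⟨r, z⟩ := a
  obtain ⟨s, w⟩ := c
  have ha : ∀ (r : ℝ) (z : ℂ), ((r, z) : ℝ × ℂ)
      = r • ((1:ℝ), (0:ℂ)) + z.re • ((0:ℝ), (1:ℂ)) + z.im • ((0:ℝ), Complex.I) := by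
    intro r z
    simp [Prod.ext_iff, Complex.ext_iff]
  conv_lhs => rw [ha r z, ha s w]
  simp only [map_add, map_smul, ContinuousLinearMap.add_apply, ContinuousLinearMap.coe_smul',
    Pi.smul_apply, smul_eq_mul]
  ring

/-- If `v` is harmonic and `C²` on an open set `Θ ⊂ ℝ³`, then `v ∘ h` is
harmonic on `h⁻¹(Θ) ⊂ ℝ⁴`. -/
theorem harmonic_comp_hopfMap (Θ : Set (ℝ × ℂ)) (hΘ : IsOpen Θ)
    (v : ℝ × ℂ → ℝ) (hv : ContDiffOn ℝ 2 v Θ)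
    (hharm : ∀ x ∈ Θ, lap3 v x = 0) :
    ∀ z ∈ hopfMap ⁻¹' Θ, lap4 (fun w => v (hopfMap w)) z = 0 := by
  intro z hz
  have hx : hopfMap z ∈ Θ := hz
  set x₀ : ℝ × ℂ := hopfMap z with hx₀
  set B := fderiv ℝ (fderiv ℝ v) x₀ with hB
  set D := fderiv ℝ v x₀ with hD
  -- the three second directional derivatives of v at x₀
  have hsd3 : ∀ f : ℝ × ℂ, secondDerivAlong v x₀ f = B f f := by
    intro f
    have hfun : (fun t : ℝ => v (x₀ + t • f))
        = fun t : ℝ => v (x₀ + t • f + t ^ 2 • (0 : ℝ × ℂ)) := by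
      funext t; simp
    rw [secondDerivAlong, hfun, secondDeriv_comp_quadratic v Θ hΘ hv x₀ f 0 hx]
    simp [hB]
  have h3 : B (1, 0) (1, 0) + B (0, 1) (0, 1) + B (0, Complex.I) (0, Complex.I) = 0 := by
    have := hharm x₀ hx
    rw [lap3, hsd3, hsd3, hsd3] at this
    exact this
  -- the four second directional derivatives of v ∘ hopfMap at z
  have key : ∀ (e : ℂ × ℂ) (a : ℝ × ℂ) (b : ℝ × ℂ),
      (∀ t : ℝ, hopfMap (z + t • e) = x₀ + t • a + t ^ 2 • b) →
      secondDerivAlong (fun w => v (hopfMap w)) z e = B a a + 2 * D b := by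
    intro e a b hcurve
    have hfun : (fun t : ℝ => v (hopfMap (z + t • e)))
        = fun t : ℝ => v (x₀ + t • a + t ^ 2 • b) := by
      funext t; rw [hcurve t]
    rw [secondDerivAlong, hfun, secondDeriv_comp_quadratic v Θ hΘ hv x₀ a b hx]
  have k1 := key ((1:ℂ), (0:ℂ)) ((2 * z.1.re : ℝ), (2 * z.2 : ℂ)) ((1:ℝ), (0:ℂ))
    (fun t => hopf_curve1 z t)
  have k2 := key ((Complex.I), (0:ℂ)) ((2 * z.1.im : ℝ), (-2 * Complex.I * z.2 : ℂ))
    ((1:ℝ), (0:ℂ)) (fun t => hopf_curve2 z t)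
  have k3 := key ((0:ℂ), (1:ℂ)) ((-2 * z.2.re : ℝ), (2 * (starRingEnd ℂ) z.1 : ℂ))
    ((-1:ℝ), (0:ℂ)) (fun t => hopf_curve3 z t)
  have k4 := key ((0:ℂ), Complex.I) ((-2 * z.2.im : ℝ), (2 * Complex.I * (starRingEnd ℂ) z.1 : ℂ))
    ((-1:ℝ), (0:ℂ)) (fun t => hopf_curve4 z t)
  have hDneg : D ((-1:ℝ), (0:ℂ)) = - D ((1:ℝ), (0:ℂ)) := by
    rw [show ((-1:ℝ), (0:ℂ)) = -((1:ℝ), (0:ℂ)) by simp [Prod.ext_iff]]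
    exact map_neg D _
  rw [lap4, k1, k2, k3, k4, hDneg]
  rw [bilin_expand B ((2 * z.1.re : ℝ), (2 * z.2 : ℂ)),
    bilin_expand B ((2 * z.1.im : ℝ), (-2 * Complex.I * z.2 : ℂ)),
    bilin_expand B ((-2 * z.2.re : ℝ), (2 * (starRingEnd ℂ) z.1 : ℂ)),
    bilin_expand B ((-2 * z.2.im : ℝ), (2 * Complex.I * (starRingEnd ℂ) z.1 : ℂ))]
  simp only [Complex.mul_re, Complex.mul_im, Complex.conj_re, Complex.conj_im,
    Complex.ofReal_re, Complex.ofReal_im, Complex.I_re, Complex.I_im,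
    Complex.neg_re, Complex.neg_im, Complex.re_ofNat, Complex.im_ofNat]
  ring_nf
  linear_combination (4 * (z.1.re ^ 2 + z.1.im ^ 2 + z.2.re ^ 2 + z.2.im ^ 2)) * h3
end
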